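/- Each of the following maps of {(q,p) ∈ ℝ³ × ℝ³ : q ≠ 0} preserves the azimuthal angular momentum J₃(q,p) = (q ×₃ p)₃: (i) the drift map (q, p) ↦ (q + (τ/m) • p, p) (this one in fact preserves the full cross product q × p and is defined for all q); (ii) the kick map (q, p) ↦ (q, p − τ k (1 − ℓ/‖q‖) • q + τ • (0, 0, −m g₀)); (iii) the dissipative map (q, p) ↦ (q, p + (Real.exp(−τ ε/m) − 1) • (⟨q, p⟩/‖q‖²) • q); for all τ ∈ ℝ, m, k, ℓ > 0, g₀ ∈ ℝ, ε ≥ 0. Consequently any composition of these maps (in particular one step of the three-term splitting integrator for the damped elastic pendulum) exactly conserves J₃. -/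

import Mathlib

open scoped RealInnerProductSpace

/-- The azimuthal angular momentum `J₃(q, p) = (q × p)₃`, the third component of the
cross product of `q` and `p` in `ℝ³`. -/
def J3 (q p : EuclideanSpace ℝ (Fin 3)) : ℝ := q 0 * p 1 - q 1 * p 0

/-- The cross product of two vectors in `ℝ³`. -/
def cross3 (q p : EuclideanSpace ℝ (Fin 3)) : EuclideanSpace ℝ (Fin 3) :=
  WithLp.toLp 2 ![q 1 * p 2 - q 2 * p 1, q 2 * p 0 - q 0 * p 2, q 0 * p 1 - q 1 * p 0]

/-- The gravity vector `(0, 0, -m g₀)`. -/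
def grav (m g₀ : ℝ) : EuclideanSpace ℝ (Fin 3) := WithLp.toLp 2 ![0, 0, -(m * g₀)]

/-- The drift, kick, and dissipative maps of the splitting integrator for the damped
elastic pendulum all preserve the azimuthal angular momentum `J₃`; the drift map in fact
preserves the full cross product `q × p` and is defined for all `q`. Consequently any
composition of these maps exactly conserves `J₃`. -/
theorem elastic_pendulum_splitting_maps_conserve_J3
    (τ m k ℓ g₀ ε : ℝ) (hm : 0 < m) (hk : 0 < k) (hl : 0 < ℓ) (hε : 0 ≤ ε) :
    (∀ q p : EuclideanSpace ℝ (Fin 3), cross3 (q + (τ / m) • p) p = cross3 q p) ∧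
    (∀ q p : EuclideanSpace ℝ (Fin 3), J3 (q + (τ / m) • p) p = J3 q p) ∧
    (∀ q p : EuclideanSpace ℝ (Fin 3), q ≠ 0 →
      J3 q (p - (τ * k * (1 - ℓ / ‖q‖)) • q + τ • grav m g₀) = J3 q p) ∧
    (∀ q p : EuclideanSpace ℝ (Fin 3), q ≠ 0 →
      J3 q (p + (Real.exp (-(τ * ε) / m) - 1) • ((⟪q, p⟫ / ‖q‖ ^ 2) • q)) = J3 q p) := by
  refine ⟨?_, ?_, ?_, ?_⟩
  · intro q p
    ext i
    fin_cases i <;>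
      simp [cross3, PiLp.add_apply, PiLp.smul_apply, smul_eq_mul] <;> ring
  · intro q p
    simp [J3, PiLp.add_apply, PiLp.smul_apply, smul_eq_mul]
    ring
  · intro q p _
    simp [J3, grav, PiLp.add_apply, PiLp.sub_apply, PiLp.smul_apply, smul_eq_mul]
    ring
  · intro q p _
    simp [J3, PiLp.add_apply, PiLp.smul_apply, smul_eq_mul]
    ring
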